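/- There is an isomorphism of abelian groups ℤ[u_1, …, u_n]/𝓘_λ ≅ ℤ[y_1, …, y_n]/I_λ. -/

import Mathlib

open MvPolynomial Finset

/-- The `k`-th elementary symmetric polynomial in the variables indexed by `T ⊆ {1,…,n}`. -/
noncomputable def esymmOn (n : ℕ) (T : Finset (Fin n)) (k : ℕ) : MvPolynomial (Fin n) ℤ :=
  ∑ A ∈ T.powersetCard k, ∏ i ∈ A, X i

/-- The dual-partition value `η_j = #{i : λ_i ≥ j}` (here `lam` is 0-indexed). -/
def eta (l : ℕ) (lam : ℕ → ℕ) (j : ℕ) : ℕ :=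
  ((Finset.range l).filter fun i => j ≤ lam i).card

/-- `p_{λ^∨}(s) = η_{n-s+1} + ⋯ + η_n`. -/
def pdual (n l : ℕ) (lam : ℕ → ℕ) (s : ℕ) : ℕ :=
  ∑ j ∈ Finset.Icc (n - s + 1) n, eta l lam j

/-- The generator `h_d(u_i)` of the K-theoretic Tanisaki ideal, for index set `T` and `q`. -/
noncomputable def hpoly (n : ℕ) (T : Finset (Fin n)) (q d : ℕ) : MvPolynomial (Fin n) ℤ :=
  if q = 0 then esymmOn n T d
  else ∑ k ∈ Finset.range (d + 1),
    MvPolynomial.C ((-1 : ℤ) ^ (d - k) * ((q + d - k - 1).choose (q - 1) : ℤ)) * esymmOn n T k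

/-- The K-theoretic Tanisaki ideal `𝓘_λ`. -/
noncomputable def KTanisaki (n l : ℕ) (lam : ℕ → ℕ) : Ideal (MvPolynomial (Fin n) ℤ) :=
  Ideal.span {p | ∃ s : ℕ, 1 ≤ s ∧ s ≤ n ∧ ∃ T : Finset (Fin n), T.card = s ∧
    ∃ d : ℕ, s + 1 - pdual n l lam s ≤ d ∧ p = hpoly n T (pdual n l lam s) d}

/-- The (cohomological) Tanisaki ideal `I_λ`. -/
noncomputable def Tanisaki (n l : ℕ) (lam : ℕ → ℕ) : Ideal (MvPolynomial (Fin n) ℤ) :=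
  Ideal.span {p | ∃ s : ℕ, 1 ≤ s ∧ s ≤ n ∧ ∃ T : Finset (Fin n), T.card = s ∧
    ∃ d : ℕ, s + 1 - pdual n l lam s ≤ d ∧ p = esymmOn n T d}

namespace TanAux


noncomputable def phi (n : ℕ) : MvPolynomial (Fin n) ℤ →ₐ[ℤ] MvPolynomial (Fin n) ℤ :=
  aeval (fun i => 1 - X i)

lemma phi_comp (n : ℕ) : (phi n).comp (phi n) = AlgHom.id ℤ _ := by
  apply MvPolynomial.algHom_ext
  intro i
  simp [phi]

lemma esymmOn_zero (n : ℕ) (T : Finset (Fin n)) (k : ℕ) (h : T.card < k) :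
    esymmOn n T k = 0 := by
  unfold esymmOn
  rw [Finset.powersetCard_eq_empty.2 h, Finset.sum_empty]

lemma count_superset (n : ℕ) (T B : Finset (Fin n)) (k : ℕ) (hB : B ⊆ T) (hk : B.card ≤ k) :
    ((T.powersetCard k).filter (fun A => B ⊆ A)).card
      = (T.card - B.card).choose (k - B.card) := by
  have h1 : ((T.powersetCard k).filter (fun A => B ⊆ A)).card
      = ((T \ B).powersetCard (k - B.card)).card := by
    apply Finset.card_nbij' (fun A => A \ B) (fun C => C ∪ B)
    · intro A hA
      simp only [Finset.mem_coe, Finset.mem_filter, Finset.mem_powersetCard] at hA ⊢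
      obtain ⟨⟨hAT, hAc⟩, hBA⟩ := hA
      refine ⟨Finset.sdiff_subset_sdiff hAT (le_refl B), ?_⟩
      rw [Finset.card_sdiff_of_subset hBA, hAc]
    · intro C hC
      simp only [Finset.mem_coe, Finset.mem_filter, Finset.mem_powersetCard] at hC ⊢
      obtain ⟨hCT, hCc⟩ := hC
      have hdisj : Disjoint C B := by
        exact Finset.disjoint_of_subset_left hCT Finset.sdiff_disjoint
      refine ⟨⟨?_, ?_⟩, Finset.subset_union_right⟩
      · exact Finset.union_subset (hCT.trans Finset.sdiff_subset) hB
      · rw [Finset.card_union_of_disjoint hdisj, hCc]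
        omega
    · intro A hA
      simp only [Finset.mem_coe, Finset.mem_filter, Finset.mem_powersetCard] at hA
      exact Finset.sdiff_union_of_subset hA.2
    · intro C hC
      simp only [Finset.mem_coe, Finset.mem_powersetCard] at hC
      have hdisj : Disjoint C B :=
        Finset.disjoint_of_subset_left hC.1 Finset.sdiff_disjoint
      exact Finset.union_sdiff_cancel_right hdisj
  rw [h1, Finset.card_powersetCard, Finset.card_sdiff_of_subset hB]

lemma count_superset_zero (n : ℕ) (T B : Finset (Fin n)) (k : ℕ) (hk : k < B.card) :
    ((T.powersetCard k).filter (fun A => B ⊆ A)) = ∅ := by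
  rw [Finset.eq_empty_iff_forall_notMem]
  intro A hA
  simp only [Finset.mem_filter, Finset.mem_powersetCard] at hA
  have := Finset.card_le_card hA.2
  omega




lemma phi_esymmOn (n : ℕ) (T : Finset (Fin n)) (k : ℕ) :
    phi n (esymmOn n T k) = ∑ j ∈ Finset.range (k + 1),
      C ((-1 : ℤ) ^ j * ((T.card - j).choose (k - j) : ℤ)) * esymmOn n T j := by
  -- step 1: expand
  have expand : ∀ A : Finset (Fin n),
      (∏ i ∈ A, (1 - X i : MvPolynomial (Fin n) ℤ))
        = ∑ B ∈ A.powerset, C ((-1 : ℤ) ^ B.card) * ∏ i ∈ B, X i := by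
    intro A
    have h1 : (∏ i ∈ A, (1 - X i : MvPolynomial (Fin n) ℤ))
        = ∏ i ∈ A, ((-X i) + 1) := by
      apply Finset.prod_congr rfl; intro i _; ring
    rw [h1, Finset.prod_add]
    apply Finset.sum_congr rfl
    intro B _
    rw [Finset.prod_const_one, mul_one]
    have : (∏ i ∈ B, (-X i : MvPolynomial (Fin n) ℤ))
        = (∏ i ∈ B, (-1 : MvPolynomial (Fin n) ℤ)) * ∏ i ∈ B, X i := by
      rw [← Finset.prod_mul_distrib]
      exact Finset.prod_congr rfl fun i _ => by ring
    rw [this, Finset.prod_const]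
    congr 1
    rw [map_pow, map_neg, map_one]
  have step1 : phi n (esymmOn n T k)
      = ∑ A ∈ T.powersetCard k, ∑ B ∈ A.powerset,
          C ((-1 : ℤ) ^ B.card) * ∏ i ∈ B, X i := by
    unfold esymmOn phi
    rw [map_sum]
    apply Finset.sum_congr rfl
    intro A _
    rw [map_prod]
    simp only [aeval_X]
    exact expand A
  -- step 2: swap
  have step2 : phi n (esymmOn n T k)
      = ∑ B ∈ T.powerset, ((T.powersetCard k).filter (fun A => B ⊆ A)).card
          • (C ((-1 : ℤ) ^ B.card) * ∏ i ∈ B, X i) := by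
    rw [step1]
    rw [Finset.sum_comm' (s := T.powersetCard k) (t := fun A => A.powerset)
      (t' := T.powerset) (s' := fun B => (T.powersetCard k).filter (fun A => B ⊆ A))
      (by
        intro A B
        simp only [Finset.mem_powersetCard, Finset.mem_powerset, Finset.mem_filter]
        constructor
        · rintro ⟨⟨h1, h2⟩, h3⟩; exact ⟨⟨⟨h1, h2⟩, h3⟩, h3.trans h1⟩
        · rintro ⟨⟨⟨h1, h2⟩, h3⟩, _⟩; exact ⟨⟨h1, h2⟩, h3⟩)]
    apply Finset.sum_congr rfl
    intro B _
    rw [Finset.sum_const]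
  -- define the per-cardinality pieces
  set g : Finset (Fin n) → MvPolynomial (Fin n) ℤ := fun B =>
    ((T.powersetCard k).filter (fun A => B ⊆ A)).card
      • (C ((-1 : ℤ) ^ B.card) * ∏ i ∈ B, X i) with hg
  have Lval : ∀ j ≤ k, (∑ B ∈ T.powersetCard j, g B)
      = C ((-1 : ℤ) ^ j * ((T.card - j).choose (k - j) : ℤ)) * esymmOn n T j := by
    intro j hj
    unfold esymmOn
    rw [Finset.mul_sum]
    apply Finset.sum_congr rfl
    intro B hB
    rw [Finset.mem_powersetCard] at hB
    rw [hg]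
    simp only
    rw [count_superset n T B k hB.1 (by omega : B.card ≤ k), hB.2, nsmul_eq_mul,
      ← C_eq_coe_nat, C_mul]
    push_cast
    ring
  have Lzero_k : ∀ j, k < j → (∑ B ∈ T.powersetCard j, g B) = 0 := by
    intro j hjk
    apply Finset.sum_eq_zero
    intro B hB
    rw [Finset.mem_powersetCard] at hB
    rw [hg]
    simp only
    rw [count_superset_zero n T B k (by omega)]
    simp
  have Lzero_s : ∀ j, T.card < j → (∑ B ∈ T.powersetCard j, g B) = 0 := by
    intro j hjs
    rw [Finset.powersetCard_eq_empty.2 hjs, Finset.sum_empty]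
  have step3 : phi n (esymmOn n T k) = ∑ j ∈ Finset.range (T.card + 1),
      ∑ B ∈ T.powersetCard j, g B := by
    rw [step2, Finset.sum_powerset]
  rw [step3]
  have step4 : (∑ j ∈ Finset.range (T.card + 1), ∑ B ∈ T.powersetCard j, g B)
      = ∑ j ∈ Finset.range (k + 1), ∑ B ∈ T.powersetCard j, g B := by
    rcases le_or_gt k T.card with h | h
    · symm
      apply Finset.sum_subset
      · intro x hx; rw [Finset.mem_range] at hx ⊢; omega
      · intro x hx hx'
        rw [Finset.mem_range] at hx hx'
        exact Lzero_k x (by omega)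
    · apply Finset.sum_subset
      · intro x hx; rw [Finset.mem_range] at hx ⊢; omega
      · intro x hx hx'
        rw [Finset.mem_range] at hx hx'
        exact Lzero_s x (by omega)
  rw [step4]
  apply Finset.sum_congr rfl
  intro j hj
  rw [Finset.mem_range] at hj
  exact Lval j (by omega)




lemma vandermonde_icc (q d s j : ℕ) (hq : 1 ≤ q) (hsd : s + 1 ≤ q + d)
    (hjs : j ≤ s) (hjd : j ≤ d) :
    (∑ k ∈ Finset.Icc j d, (q + d - s - 1).choose (d - k) * (s - j).choose (k - j))
      = (q + d - j - 1).choose (d - j) := by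
  have hm : q + d - j - 1 = (q + d - s - 1) + (s - j) := by omega
  rw [hm, Nat.add_choose_eq]
  rw [Finset.Nat.sum_antidiagonal_eq_sum_range_succ
    (fun a b => (q + d - s - 1).choose a * (s - j).choose b) (d - j)]
  apply Finset.sum_nbij' (fun k => d - k) (fun i => d - i)
  · intro k hk; rw [Finset.mem_Icc] at hk; rw [Finset.mem_range]; omega
  · intro i hi; rw [Finset.mem_range] at hi; rw [Finset.mem_Icc]; omega
  · intro k hk; rw [Finset.mem_Icc] at hk; omega
  · intro i hi; rw [Finset.mem_range] at hi; omega
  · intro k hk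
    rw [Finset.mem_Icc] at hk
    rw [show d - j - (d - k) = k - j from by omega]

lemma hpoly_eq (n : ℕ) (T : Finset (Fin n)) (q d : ℕ) (hq : 1 ≤ q)
    (hd : T.card + 1 ≤ q + d) :
    hpoly n T q d = ∑ k ∈ Finset.range (d + 1),
      C ((-1 : ℤ) ^ d * ((q + d - T.card - 1).choose (d - k) : ℤ)) * phi n (esymmOn n T k) := by
  have rhs1 : (∑ k ∈ Finset.range (d + 1),
      C ((-1 : ℤ) ^ d * ((q + d - T.card - 1).choose (d - k) : ℤ)) * phi n (esymmOn n T k))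
      = ∑ k ∈ Finset.range (d + 1), ∑ j ∈ Finset.range (k + 1),
          C (((-1 : ℤ) ^ d * ((q + d - T.card - 1).choose (d - k) : ℤ))
              * ((-1 : ℤ) ^ j * ((T.card - j).choose (k - j) : ℤ))) * esymmOn n T j := by
    apply Finset.sum_congr rfl
    intro k _
    rw [phi_esymmOn, Finset.mul_sum]
    apply Finset.sum_congr rfl
    intro j _
    simp only [C_mul]
    ring
  rw [rhs1]
  rw [Finset.sum_comm' (s := Finset.range (d + 1)) (t := fun k => Finset.range (k + 1))
    (t' := Finset.range (d + 1)) (s' := fun j => Finset.Icc j d)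
    (by
      intro k j
      simp only [Finset.mem_range, Finset.mem_Icc]
      omega)]
  unfold hpoly
  rw [if_neg (by omega)]
  apply Finset.sum_congr rfl
  intro j hj
  rw [Finset.mem_range] at hj
  have hsum : (∑ k ∈ Finset.Icc j d,
      C (((-1 : ℤ) ^ d * ((q + d - T.card - 1).choose (d - k) : ℤ))
          * ((-1 : ℤ) ^ j * ((T.card - j).choose (k - j) : ℤ))) * esymmOn n T j)
      = C (∑ k ∈ Finset.Icc j d,
          ((-1 : ℤ) ^ d * ((q + d - T.card - 1).choose (d - k) : ℤ))
            * ((-1 : ℤ) ^ j * ((T.card - j).choose (k - j) : ℤ))) * esymmOn n T j := by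
    rw [map_sum, Finset.sum_mul]
  rw [hsum]
  by_cases hjs : j ≤ T.card
  · have hsign : ((-1 : ℤ) ^ (d - j)) = (-1 : ℤ) ^ d * (-1 : ℤ) ^ j := by
      have h2 : (-1 : ℤ) ^ d * (-1 : ℤ) ^ j = (-1 : ℤ) ^ (d + j) := by rw [pow_add]
      rw [h2, show d + j = (d - j) + 2 * j from by omega, pow_add, pow_mul]
      norm_num
    have hchoose : (q + d - j - 1).choose (q - 1) = (q + d - j - 1).choose (d - j) := by
      have h1 : q - 1 = (q + d - j - 1) - (d - j) := by omega
      rw [h1, Nat.choose_symm (by omega)]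
    have hcoef : ((-1 : ℤ) ^ (d - j) * ((q + d - j - 1).choose (q - 1) : ℤ))
        = ∑ k ∈ Finset.Icc j d,
            ((-1 : ℤ) ^ d * ((q + d - T.card - 1).choose (d - k) : ℤ))
              * ((-1 : ℤ) ^ j * ((T.card - j).choose (k - j) : ℤ)) := by
      rw [hchoose, hsign, ← vandermonde_icc q d T.card j hq hd hjs (by omega)]
      push_cast
      rw [Finset.mul_sum]
      apply Finset.sum_congr rfl
      intro k _
      ring
    rw [hcoef]
  · rw [esymmOn_zero n T j (by omega)]
    simp




lemma phi_esymm_mem (n l : ℕ) (lam : ℕ → ℕ) :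
    ∀ d s : ℕ, 1 ≤ s → s ≤ n → ∀ T : Finset (Fin n), T.card = s →
      s + 1 - pdual n l lam s ≤ d →
      phi n (esymmOn n T d) ∈ KTanisaki n l lam := by
  intro d
  induction d using Nat.strong_induction_on with
  | _ d IH =>
  intro s hs1 hsn T hT hd
  by_cases hq0 : pdual n l lam s = 0
  · rw [esymmOn_zero n T d (by omega), map_zero]
    exact zero_mem _
  · set q := pdual n l lam s with hq
    have hqd : T.card + 1 ≤ q + d := by omega
    have hkey := hpoly_eq n T q d (by omega) hqd
    rw [Finset.sum_range_succ] at hkey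
    have hmem_h : hpoly n T q d ∈ KTanisaki n l lam :=
      Ideal.subset_span ⟨s, hs1, hsn, T, hT, d, hd, rfl⟩
    have hmem_sum : (∑ k ∈ Finset.range d,
        C ((-1 : ℤ) ^ d * ((q + d - T.card - 1).choose (d - k) : ℤ)) * phi n (esymmOn n T k))
          ∈ KTanisaki n l lam := by
      apply Submodule.sum_mem
      intro k hk
      rw [Finset.mem_range] at hk
      by_cases hch : (q + d - T.card - 1).choose (d - k) = 0
      · rw [hch]
        simp
      · have hk' : s + 1 - q ≤ k := by
          have hle : d - k ≤ q + d - T.card - 1 := by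
            by_contra hlt
            exact hch (Nat.choose_eq_zero_of_lt (by omega))
          omega
        exact Ideal.mul_mem_left _ _ (IH k hk s hs1 hsn T hT hk')
    have hCC : (C ((-1 : ℤ) ^ d) : MvPolynomial (Fin n) ℤ) * C ((-1 : ℤ) ^ d) = 1 := by
      rw [← map_mul, ← mul_pow]
      norm_num
    have heq : phi n (esymmOn n T d) = C ((-1 : ℤ) ^ d) * (hpoly n T q d
        - ∑ k ∈ Finset.range d,
            C ((-1 : ℤ) ^ d * ((q + d - T.card - 1).choose (d - k) : ℤ))
              * phi n (esymmOn n T k)) := by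
      rw [hkey]
      rw [show (d - d) = 0 from by omega, Nat.choose_zero_right]
      push_cast
      rw [mul_one]
      rw [add_sub_cancel_left, ← mul_assoc, hCC, one_mul]
    rw [heq]
    exact Ideal.mul_mem_left _ _ (Submodule.sub_mem _ hmem_h hmem_sum)

lemma ideal_eq (n l : ℕ) (lam : ℕ → ℕ) :
    KTanisaki n l lam = Ideal.map (phi n) (Tanisaki n l lam) := by
  unfold Tanisaki
  rw [Ideal.map_span]
  apply le_antisymm
  · unfold KTanisaki
    rw [Ideal.span_le]
    rintro p ⟨s, hs1, hsn, T, hT, d, hd, rfl⟩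
    rw [SetLike.mem_coe]
    by_cases hq0 : pdual n l lam s = 0
    · rw [hq0] at hd ⊢
      unfold hpoly
      rw [if_pos rfl, esymmOn_zero n T d (by omega)]
      exact zero_mem _
    · set q := pdual n l lam s with hq
      rw [hpoly_eq n T q d (by omega) (by omega)]
      apply Submodule.sum_mem
      intro k hk
      rw [Finset.mem_range] at hk
      by_cases hch : (q + d - T.card - 1).choose (d - k) = 0
      · rw [hch]
        simp
      · have hk' : s + 1 - q ≤ k := by
          have hle : d - k ≤ q + d - T.card - 1 := by
            by_contra hlt
            exact hch (Nat.choose_eq_zero_of_lt (by omega))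
          omega
        apply Ideal.mul_mem_left
        apply Ideal.subset_span
        exact ⟨esymmOn n T k, ⟨s, hs1, hsn, T, hT, k, hk', rfl⟩, rfl⟩
  · rw [Ideal.span_le]
    rintro p ⟨p', ⟨s, hs1, hsn, T, hT, d, hd, rfl⟩, rfl⟩
    rw [SetLike.mem_coe]
    exact phi_esymm_mem n l lam d s hs1 hsn T hT hd

noncomputable def phiEquiv (n : ℕ) : MvPolynomial (Fin n) ℤ ≃ₐ[ℤ] MvPolynomial (Fin n) ℤ :=
  AlgEquiv.ofAlgHom (phi n) (phi n) (phi_comp n) (phi_comp n)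


end TanAux

/-- There is an isomorphism of abelian groups
ℤ[u_1,…,u_n]/𝓘_λ ≅ ℤ[y_1,…,y_n]/I_λ. -/
theorem KTanisaki_quotient_addEquiv_Tanisaki_quotient
    (n l : ℕ) (lam : ℕ → ℕ) (hn : 1 ≤ n)
    (hmono : ∀ i j : ℕ, i ≤ j → lam j ≤ lam i)
    (hpos : ∀ i < l, 0 < lam i) (hzero : ∀ i, l ≤ i → lam i = 0)
    (hsum : ∑ i ∈ Finset.range l, lam i = n) :
    Nonempty ((MvPolynomial (Fin n) ℤ ⧸ KTanisaki n l lam) ≃+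
      (MvPolynomial (Fin n) ℤ ⧸ Tanisaki n l lam)) := by
  have hmap : KTanisaki n l lam
      = Ideal.map ((TanAux.phiEquiv n).toRingEquiv : MvPolynomial (Fin n) ℤ →+* MvPolynomial (Fin n) ℤ)
          (Tanisaki n l lam) := by
    rw [TanAux.ideal_eq n l lam]
    rfl
  exact ⟨((Ideal.quotientEquiv (Tanisaki n l lam) (KTanisaki n l lam)
    (TanAux.phiEquiv n).toRingEquiv hmap).symm).toAddEquiv⟩
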